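/- Let F be a field, let V₁,…,V_d be finite-dimensional F-vector spaces with V = V₁ ⊕ ⋯ ⊕ V_d, let Tᵢ : Vᵢ → Vᵢ be linear endomorphisms, and let T = T₁ ⊕ ⋯ ⊕ T_d : V → V. Fix an index i and let W ⊆ V be a T-invariant subspace whose projection to the i-th summand is all of Vᵢ. Let μ ∈ F be an eigenvalue of T of algebraic multiplicity one (a simple root of the characteristic polynomial of T) such that μ is an eigenvalue of Tᵢ. Then W contains a nonzero vector v whose component in V_j is zero for every j ≠ i (namely, an eigenvector of T with eigenvalue μ, supported in the i-th summand). -/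

import Mathlib

open Polynomial

section helpers

variable {F M N : Type*} [Field F] [AddCommGroup M] [Module F M] [AddCommGroup N] [Module F N]

/-- aeval commutes along an intertwining map. -/
lemma my_aeval_comm (π : M →ₗ[F] N) (f : Module.End F M) (g : Module.End F N)
    (h : ∀ x, π (f x) = g (π x)) (p : F[X]) (x : M) :
    π (Polynomial.aeval f p x) = Polynomial.aeval g p (π x) := by
  induction p using Polynomial.induction_on generalizing x with
  | C a => simp [Module.algebraMap_end_apply]
  | add p q hp hq => simp [hp, hq]
  | monomial n a hn =>
      have h1 : ∀ (φ : Module.End F M) (y : M),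
          Polynomial.aeval φ (C a * X ^ (n + 1)) y
            = Polynomial.aeval φ (C a * X ^ n) (φ y) := by
        intro φ y
        simp [pow_succ, mul_assoc, Module.algebraMap_end_apply, Module.End.mul_apply]
      have h2 : ∀ (φ : Module.End F N) (y : N),
          Polynomial.aeval φ (C a * X ^ (n + 1)) y
            = Polynomial.aeval φ (C a * X ^ n) (φ y) := by
        intro φ y
        simp [pow_succ, mul_assoc, Module.algebraMap_end_apply, Module.End.mul_apply]
      rw [h1, hn (f x), h, h2]

/-- An invariant subspace is invariant under every polynomial in the endomorphism. -/
lemma my_aeval_mem (f : Module.End F M) (W : Submodule F M)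
    (hW : ∀ w ∈ W, f w ∈ W) (p : F[X]) : ∀ w ∈ W, Polynomial.aeval f p w ∈ W := by
  induction p using Polynomial.induction_on with
  | C a => intro w hw; simpa [Module.algebraMap_end_apply] using W.smul_mem a hw
  | add p q hp hq => intro w hw; simpa using W.add_mem (hp w hw) (hq w hw)
  | monomial n a hn =>
      intro w hw
      have : Polynomial.aeval f (C a * X ^ (n + 1)) w
          = Polynomial.aeval f (C a * X ^ n) (f w) := by
        simp [pow_succ, mul_assoc, Module.algebraMap_end_apply, Module.End.mul_apply]
      rw [this]
      exact hn (f w) (hW w hw)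

lemma my_isRoot_charpoly [FiniteDimensional F M] {f : Module.End F M} {μ : F}
    (h : f.HasEigenvalue μ) : f.charpoly.IsRoot μ := by
  have h1 : (minpoly F f).IsRoot μ := Module.End.hasEigenvalue_iff_isRoot.mp h
  have h2 : minpoly F f ∣ f.charpoly := LinearMap.minpoly_dvd_charpoly f
  exact h1.dvd h2

end helpers

section split

variable (F : Type*) [Field F] {d : ℕ} (V : Fin d → Type*)
    [∀ i, AddCommGroup (V i)] [∀ i, Module F (V i)]

/-- Splitting off the `i`-th coordinate of a pi type, linearly. -/
def mySplit (i : Fin d) :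
    (∀ j, V j) ≃ₗ[F] V i × (∀ j : {j : Fin d // j ≠ i}, V j.1) :=
  { LinearMap.prod (LinearMap.proj i)
      (LinearMap.pi fun j : {j : Fin d // j ≠ i} => LinearMap.proj j.1) with
    invFun := fun x => Pi.single i x.1 + fun j => if h : j = i then 0 else x.2 ⟨j, h⟩
    left_inv := by
      intro v
      funext j
      by_cases h : j = i
      · subst h
        show Pi.single j (v j) j + (if _ : j = j then (0 : V j) else v j) = v j
        simp
      · simp [h, Pi.single_eq_of_ne h]
    right_inv := by
      intro x
      refine Prod.ext ?_ ?_
      · simp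
      · funext j
        simp [j.2] }

@[simp] lemma mySplit_symm_apply_same (i : Fin d) (x : V i × (∀ j : {j : Fin d // j ≠ i}, V j.1)) :
    (mySplit F V i).symm x i = x.1 := by
  show (Pi.single i x.1 + fun j => if h : j = i then 0 else x.2 ⟨j, h⟩) i = x.1
  simp

@[simp] lemma mySplit_symm_apply_ne (i : Fin d) (x : V i × (∀ j : {j : Fin d // j ≠ i}, V j.1))
    (j : Fin d) (h : j ≠ i) : (mySplit F V i).symm x j = x.2 ⟨j, h⟩ := by
  show (Pi.single i x.1 + fun j => if h : j = i then 0 else x.2 ⟨j, h⟩) j = x.2 ⟨j, h⟩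
  simp [h, Pi.single_eq_of_ne h]

lemma mySplit_conj (i : Fin d) (T : ∀ i, V i →ₗ[F] V i) :
    (mySplit F V i).conj (LinearMap.pi fun j => (T j).comp (LinearMap.proj j))
      = (T i).prodMap
          (LinearMap.pi fun j : {j : Fin d // j ≠ i} => (T j.1).comp (LinearMap.proj j)) := by
  apply LinearMap.ext
  intro x
  rw [LinearEquiv.conj_apply, LinearMap.comp_apply, LinearMap.comp_apply]
  refine Prod.ext ?_ ?_
  · show (T i) ((mySplit F V i).symm x i) = (T i) x.1
    rw [mySplit_symm_apply_same]
  · funext j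
    show (T j.1) ((mySplit F V i).symm x j.1) = (T j.1) (x.2 j)
    rw [mySplit_symm_apply_ne F V i x j.1 j.2]

end split



/-- Let `V = V₁ ⊕ ⋯ ⊕ V_d` with `T = T₁ ⊕ ⋯ ⊕ T_d`, let `W ⊆ V` be a
`T`-invariant subspace whose projection to the `i`-th summand is all of `Vᵢ`, and let `μ`
be an eigenvalue of `T` of algebraic multiplicity one (a simple root of the characteristic
polynomial of `T`) which is an eigenvalue of `Tᵢ`.  Then `W` contains a nonzero vector
supported in the `i`-th summand, namely an eigenvector of `T` with eigenvalue `μ`. -/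
theorem exists_supported_eigenvector_in_invariant_subspace
    (F : Type*) [Field F] {d : ℕ} (V : Fin d → Type*)
    [∀ i, AddCommGroup (V i)] [∀ i, Module F (V i)] [∀ i, FiniteDimensional F (V i)]
    (T : ∀ i, V i →ₗ[F] V i) (i : Fin d) (W : Submodule F (∀ j, V j))
    (hWinv : ∀ w ∈ W, (LinearMap.pi fun j => (T j).comp (LinearMap.proj j)) w ∈ W)
    (hWproj : Submodule.map (LinearMap.proj i : (∀ j, V j) →ₗ[F] V i) W = ⊤)
    (μ : F)
    (hev : Module.End.HasEigenvalue
      ((LinearMap.pi fun j => (T j).comp (LinearMap.proj j)) : Module.End F (∀ j, V j)) μ)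
    (hmult : ((LinearMap.pi fun j => (T j).comp (LinearMap.proj j)) :
        Module.End F (∀ j, V j)).charpoly.rootMultiplicity μ = 1)
    (hevi : Module.End.HasEigenvalue (T i) μ) :
    ∃ v ∈ W, v ≠ 0 ∧ (∀ j : Fin d, j ≠ i → v j = 0) ∧
      (LinearMap.pi fun j => (T j).comp (LinearMap.proj j)) v = μ • v := by
  classical
  set Tfull : Module.End F (∀ j, V j) :=
    (LinearMap.pi fun j => (T j).comp (LinearMap.proj j)) with hTfull
  set Trest : Module.End F (∀ j : {j : Fin d // j ≠ i}, V j.1) :=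
    (LinearMap.pi fun j : {j : Fin d // j ≠ i} => (T j.1).comp (LinearMap.proj j)) with hTrest
  -- charpoly factorization
  have hchar : Tfull.charpoly = (T i).charpoly * Trest.charpoly := by
    rw [← LinearEquiv.charpoly_conj (mySplit F V i) Tfull, hTfull, mySplit_conj,
      LinearMap.charpoly_prodMap]
  -- μ is not an eigenvalue of T j for j ≠ i
  have hnotev : ∀ j : Fin d, j ≠ i → ∀ y : V j, T j y = μ • y → y = 0 := by
    intro j hj y hy
    by_contra hy0
    -- y gives an eigenvector of Trest
    have hrest : Trest.HasEigenvalue μ := by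
      refine Module.End.hasEigenvalue_of_hasEigenvector
        (x := Pi.single (⟨j, hj⟩ : {j : Fin d // j ≠ i}) y) ⟨Module.End.mem_eigenspace_iff.2 ?_, ?_⟩
      · have hTre : ∀ (v : ∀ k : {j : Fin d // j ≠ i}, V k.1) (k), Trest v k = T k.1 (v k) :=
          fun v k => rfl
        funext k
        rw [hTre, Pi.smul_apply]
        by_cases hk : k = ⟨j, hj⟩
        · subst hk; simpa using hy
        · simp [Pi.single_eq_of_ne hk]
      · intro h0
        exact hy0 (by simpa using congrFun h0 ⟨j, hj⟩)
    have h1 : 1 ≤ (T i).charpoly.rootMultiplicity μ :=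
      ((T i).charpoly.rootMultiplicity_pos (LinearMap.charpoly_monic _).ne_zero).2
        (my_isRoot_charpoly hevi)
    have h2 : 1 ≤ Trest.charpoly.rootMultiplicity μ :=
      (Trest.charpoly.rootMultiplicity_pos (LinearMap.charpoly_monic _).ne_zero).2
        (my_isRoot_charpoly hrest)
    have := Polynomial.rootMultiplicity_mul (x := μ)
      (mul_ne_zero (LinearMap.charpoly_monic (T i)).ne_zero
        (LinearMap.charpoly_monic Trest).ne_zero)
    rw [← hchar, hmult] at this
    omega
  -- get the eigenvector x of T i and a preimage w ∈ W
  obtain ⟨x, hxmem, hx0⟩ := hevi.exists_hasEigenvector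
  have hxeq : T i x = μ • x := Module.End.mem_eigenspace_iff.1 hxmem
  have : x ∈ Submodule.map (LinearMap.proj i : (∀ j, V j) →ₗ[F] V i) W := by
    rw [hWproj]; trivial
  obtain ⟨w, hwW, hwi⟩ := this
  -- the quotient polynomial
  set χ := Tfull.charpoly with hχ
  set q := χ /ₘ (Polynomial.X - Polynomial.C μ) ^ 1 with hq
  have hχ0 : χ ≠ 0 := (LinearMap.charpoly_monic Tfull).ne_zero
  have hfac : (Polynomial.X - Polynomial.C μ) * q = χ := by
    have := Polynomial.pow_mul_divByMonic_rootMultiplicity_eq χ μ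
    rw [hmult] at this
    rw [hq]
    simpa using this
  have hqμ : q.eval μ ≠ 0 := by
    have := Polynomial.eval_divByMonic_pow_rootMultiplicity_ne_zero (p := χ) μ hχ0
    rwa [hmult] at this
  -- the candidate vector
  set u := Polynomial.aeval Tfull q w with hu
  have huW : u ∈ W := my_aeval_mem Tfull W hWinv q w hwW
  have hCH : Polynomial.aeval Tfull χ w = 0 := by
    rw [hχ, LinearMap.aeval_self_charpoly]; rfl
  have huev : Tfull u = μ • u := by
    have : Polynomial.aeval Tfull ((Polynomial.X - Polynomial.C μ) * q) w = 0 := by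
      rw [hfac]; exact hCH
    rw [map_mul] at this
    have h2 : (Polynomial.aeval Tfull (Polynomial.X - Polynomial.C μ)) u = 0 := this
    rw [map_sub, Polynomial.aeval_X, Polynomial.aeval_C] at h2
    have h3 : Tfull u - μ • u = 0 := by
      simpa [LinearMap.sub_apply, Module.algebraMap_end_apply] using h2
    exact sub_eq_zero.1 h3
  have hui : u i = q.eval μ • x := by
    have hcomm : ∀ z : ∀ j, V j,
        (LinearMap.proj i : (∀ j, V j) →ₗ[F] V i) (Tfull z)
          = (T i) ((LinearMap.proj i : (∀ j, V j) →ₗ[F] V i) z) := fun z => rfl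
    have hc := my_aeval_comm (LinearMap.proj i) Tfull (T i) hcomm q w
    calc u i = Polynomial.aeval (T i) q (w i) := hc
      _ = q.eval μ • x := by
          rw [show w i = x from hwi]
          exact Module.End.aeval_apply_of_hasEigenvector ⟨hxmem, hx0⟩
  have hu0 : u ≠ 0 := by
    intro h
    apply smul_ne_zero hqμ hx0
    rw [← hui, h]; rfl
  refine ⟨u, huW, hu0, ?_, huev⟩
  intro j hj
  refine hnotev j hj (u j) ?_
  have : (Tfull u) j = (μ • u) j := by rw [huev]
  exact this
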